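/- For every set A ⊆ ℝ² and all real numbers H₁, H₂ with 0 < H₂ < H₁ ≤ 1, the parabolic Hausdorff dimensions satisfy dimH(A; ϱ_{H₂}) − (1/H₂ − 1/H₁) ≤ dimH(A; ϱ_{H₁}) ≤ 1 + (H₂/H₁)(dimH(A; ϱ_{H₂}) − 1). -/

import Mathlib

open Filter MeasureTheory Set Topology
open scoped ENNReal NNReal

/-- The parabolic metric `ϱ_H((u,x),(v,y)) = max(|u−v|^H, |x−y|)` on `ℝ²`. -/
noncomputable def pDist (H : ℝ) (p q : ℝ × ℝ) : ℝ :=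
  max (|p.1 - q.1| ^ H) |p.2 - q.2|

/-- Diameter of a set with respect to the parabolic metric `ϱ_H` (in `ℝ≥0∞`). -/
noncomputable def pDiam (H : ℝ) (S : Set (ℝ × ℝ)) : ℝ≥0∞ :=
  ⨆ (p : ℝ × ℝ) (_ : p ∈ S) (q : ℝ × ℝ) (_ : q ∈ S), ENNReal.ofReal (pDist H p q)

/-- `A` is null for the `s`-dimensional Hausdorff measure in the parabolic metric `ϱ_H`:
for every `ε > 0` there is a countable cover of `A` by sets of `ϱ_H`-diameter at most `ε`
whose sum of `s`-th powers of diameters is less than `ε`. -/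
def pNull (H s : ℝ) (A : Set (ℝ × ℝ)) : Prop :=
  ∀ ε : ℝ, 0 < ε → ∃ U : ℕ → Set (ℝ × ℝ), A ⊆ ⋃ n, U n ∧
    (∀ n, pDiam H (U n) ≤ ENNReal.ofReal ε) ∧
    (∑' n, pDiam H (U n) ^ s) < ENNReal.ofReal ε

/-- The Hausdorff dimension of `A ⊆ ℝ²` computed in the parabolic metric `ϱ_H`:
the infimum of the nonnegative exponents `s` for which the `s`-dimensional parabolic
Hausdorff measure of `A` vanishes. -/
noncomputable def pDimH (H : ℝ) (A : Set (ℝ × ℝ)) : ℝ :=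
  sInf {s : ℝ | 0 ≤ s ∧ pNull H s A}

lemma pDiam_le {H d : ℝ} {S : Set (ℝ × ℝ)}
    (h : ∀ p ∈ S, ∀ q ∈ S, pDist H p q ≤ d) : pDiam H S ≤ ENNReal.ofReal d := by
  refine iSup₂_le fun p hp => iSup₂_le fun q hq => ENNReal.ofReal_le_ofReal (h p hp q hq)

lemma pDist_le_of_pDiam_le {H d : ℝ} {S : Set (ℝ × ℝ)} (hd : 0 ≤ d)
    (h : pDiam H S ≤ ENNReal.ofReal d) {p q : ℝ × ℝ} (hp : p ∈ S) (hq : q ∈ S) :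
    pDist H p q ≤ d := by
  have h1 : ENNReal.ofReal (pDist H p q) ≤ pDiam H S :=
    le_iSup₂_of_le p hp (le_iSup₂_of_le q hq le_rfl)
  exact (ENNReal.ofReal_le_ofReal_iff hd).1 (h1.trans h)

lemma pDiam_empty (H : ℝ) : pDiam H (∅ : Set (ℝ × ℝ)) = 0 := by
  simp [pDiam]

lemma pDiam_zero_any {H H' : ℝ} (hH : 0 < H) (hH' : 0 < H') {S : Set (ℝ × ℝ)}
    (h : pDiam H S = 0) : pDiam H' S = 0 := by
  have key : ∀ p ∈ S, ∀ q ∈ S, pDist H' p q ≤ 0 := by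
    intro p hp q hq
    have h0 : pDist H p q ≤ 0 :=
      pDist_le_of_pDiam_le le_rfl (by simp [h]) hp hq
    have h1 : |p.1 - q.1| ^ H ≤ 0 := le_trans (le_max_left _ _) h0
    have h2 : |p.2 - q.2| ≤ 0 := le_trans (le_max_right _ _) h0
    have h3 : |p.1 - q.1| = 0 := by
      by_contra hne
      have hpos : 0 < |p.1 - q.1| := lt_of_le_of_ne (abs_nonneg _) (Ne.symm hne)
      exact absurd h1 (not_le.2 (Real.rpow_pos_of_pos hpos H))
    have : pDist H' p q = 0 := by
      simp [pDist, h3, Real.zero_rpow hH'.ne', le_antisymm h2 (abs_nonneg _)]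
    exact this.le
  have := pDiam_le key
  simpa using this

/-- Slice a set into strips of width `L` along the function `f`. -/
lemma cut (U : Set (ℝ × ℝ)) (hU : U.Nonempty) (f : ℝ × ℝ → ℝ) (M L : ℝ) (hL : 0 < L)
    (hext : ∀ p ∈ U, ∀ q ∈ U, |f p - f q| ≤ M) :
    ∃ V : ℤ → Set (ℝ × ℝ),
      (U ⊆ ⋃ k, V k) ∧ (∀ k, V k ⊆ U) ∧
      (∀ k, ∀ p ∈ V k, ∀ q ∈ V k, |f p - f q| ≤ L) ∧
      (∀ k : ℤ, k ∉ Finset.Icc (-(⌈M / L⌉₊ : ℤ)) (⌈M / L⌉₊ : ℤ) → V k = ∅) := by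
  obtain ⟨p₀, hp₀⟩ := hU
  set c := f p₀ with hc
  have hM : 0 ≤ M := by simpa using hext p₀ hp₀ p₀ hp₀
  refine ⟨fun k => {p ∈ U | c + k * L ≤ f p ∧ f p < c + (k + 1) * L}, ?_, fun k p hp => hp.1,
    ?_, ?_⟩
  · intro p hp
    refine mem_iUnion.2 ⟨⌊(f p - c) / L⌋, hp, ?_, ?_⟩
    · have h1 : (⌊(f p - c) / L⌋ : ℝ) ≤ (f p - c) / L := Int.floor_le _
      have := (le_div_iff₀ hL).1 h1
      linarith
    · have h1 : (f p - c) / L < ⌊(f p - c) / L⌋ + 1 := Int.lt_floor_add_one _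
      have := (div_lt_iff₀ hL).1 h1
      push_cast
      linarith
  · intro k p hp q hq
    have h1 := hp.2.1; have h2 := hp.2.2; have h3 := hq.2.1; have h4 := hq.2.2
    rw [abs_le]
    constructor <;> push_cast at h2 h4 ⊢ <;> linarith
  · intro k hk
    rw [eq_empty_iff_forall_notMem]
    intro p hp
    apply hk
    have habs : |f p - c| ≤ M := hext p hp.1 p₀ hp₀
    have hub : f p - c ≤ M := le_trans (le_abs_self _) habs
    have hlb : -M ≤ f p - c := neg_le_of_abs_le habs
    have hML : M / L ≤ (⌈M / L⌉₊ : ℝ) := Nat.le_ceil _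
    refine Finset.mem_Icc.2 ⟨?_, ?_⟩
    · -- -N ≤ k
      have h2 := hp.2.2
      have hstep : -M < ((k : ℝ) + 1) * L := by push_cast at h2 ⊢; linarith
      have hdiv : (-M) / L < (k : ℝ) + 1 := (div_lt_iff₀ hL).2 (by linarith)
      have hneg : -((⌈M / L⌉₊ : ℝ)) ≤ (-M) / L := by
        rw [neg_div]; linarith
      have hcast : (-(⌈M / L⌉₊ : ℤ) : ℝ) < ((k + 1 : ℤ) : ℝ) := by push_cast; linarith
      have : -(⌈M / L⌉₊ : ℤ) < k + 1 := by exact_mod_cast hcast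
      linarith [Int.lt_add_one_iff.1 this]
    · have h1 := hp.2.1
      have hkL : (k : ℝ) * L ≤ M := by linarith
      have : (k : ℝ) ≤ M / L := (le_div_iff₀ hL).2 hkL
      have : (k : ℝ) ≤ (⌈M / L⌉₊ : ℝ) := this.trans hML
      exact_mod_cast this

lemma tsum_cut_le {V : ℤ → Set (ℝ × ℝ)} {H' M L d s' : ℝ} (hs' : 0 < s')
    (hML : 0 ≤ M / L)
    (hempty : ∀ k : ℤ, k ∉ Finset.Icc (-(⌈M / L⌉₊ : ℤ)) (⌈M / L⌉₊ : ℤ) → V k = ∅)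
    (hdiam : ∀ k, pDiam H' (V k) ≤ ENNReal.ofReal d) :
    ∑' k, pDiam H' (V k) ^ s' ≤ ENNReal.ofReal (2 * (M / L) + 3) * ENNReal.ofReal d ^ s' := by
  set N := ⌈M / L⌉₊ with hN
  set K := Finset.Icc (-(N : ℤ)) (N : ℤ) with hK
  have h0 : ∀ k ∉ K, pDiam H' (V k) ^ s' = 0 := fun k hk => by
    rw [hempty k hk, pDiam_empty, ENNReal.zero_rpow_of_pos hs']
  rw [tsum_eq_sum h0]
  have hb : ∀ k ∈ K, pDiam H' (V k) ^ s' ≤ ENNReal.ofReal d ^ s' :=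
    fun k _ => ENNReal.rpow_le_rpow (hdiam k) hs'.le
  have hcard : K.card = 2 * N + 1 := by
    rw [hK, Int.card_Icc]; omega
  calc ∑ k ∈ K, pDiam H' (V k) ^ s' ≤ K.card • (ENNReal.ofReal d ^ s') :=
        Finset.sum_le_card_nsmul _ _ _ hb
    _ = (K.card : ℝ≥0∞) * ENNReal.ofReal d ^ s' := by rw [nsmul_eq_mul]
    _ ≤ ENNReal.ofReal (2 * (M / L) + 3) * ENNReal.ofReal d ^ s' := by
        apply mul_le_mul_left
        have hNlt : (N : ℝ) < M / L + 1 := Nat.ceil_lt_add_one hML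
        rw [hcard, show ((2 * N + 1 : ℕ) : ℝ≥0∞) = ENNReal.ofReal ((2 * N + 1 : ℕ) : ℝ) from
          (ENNReal.ofReal_natCast _).symm]
        apply ENNReal.ofReal_le_ofReal
        push_cast
        linarith

lemma transferA {A : Set (ℝ × ℝ)} {H₁ H₂ s : ℝ} (h₂ : 0 < H₂) (h₂₁ : H₂ < H₁)
    (hs : 0 ≤ s) (hN : pNull H₁ s A) : pNull H₂ (s + (1 / H₂ - 1 / H₁)) A := by
  have h1pos : 0 < H₁ := h₂.trans h₂₁
  have hΔpos : 0 < 1 / H₂ - 1 / H₁ := by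
    have := one_div_lt_one_div_of_lt h₂ h₂₁
    linarith
  set Δ : ℝ := 1 / H₂ - 1 / H₁ with hΔdef
  have hs' : 0 < s + Δ := by linarith
  intro ε hε
  have hminpos : 0 < min ε 1 := lt_min hε one_pos
  have hε'pos : 0 < min ε 1 / 6 := by linarith
  set ε' : ℝ := min ε 1 / 6 with hε'def
  have hε'le1 : ε' ≤ 1 := by
    have : min ε 1 ≤ 1 := min_le_right _ _
    rw [hε'def]; linarith
  have h5ε' : 5 * ε' ≤ ε := by
    have : min ε 1 ≤ ε := min_le_left _ _
    rw [hε'def]; linarith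
  obtain ⟨U, hcov, hdiam, hsum⟩ := hN ε' hε'pos
  have key : ∀ n, ∃ V : ℤ → Set (ℝ × ℝ), (U n ⊆ ⋃ k, V k) ∧
      (∀ k, pDiam H₂ (V k) ≤ ENNReal.ofReal ε') ∧
      (∑' k, pDiam H₂ (V k) ^ (s + Δ)) ≤ 5 * pDiam H₁ (U n) ^ s := by
    intro n
    rcases eq_or_ne (pDiam H₁ (U n)) 0 with h0 | h0
    · have hz : pDiam H₂ (U n) = 0 := pDiam_zero_any h1pos h₂ h0
      refine ⟨fun k => if k = 0 then U n else ∅, ?_, ?_, ?_⟩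
      · intro p hp; exact mem_iUnion.2 ⟨0, by simpa using hp⟩
      · intro k
        rcases eq_or_ne k 0 with rfl | hk
        · simp [hz]
        · simp [hk, pDiam_empty]
      · have hterm : ∀ k : ℤ,
            pDiam H₂ ((fun k => if k = 0 then U n else ∅) k) ^ (s + Δ) = 0 := by
          intro k
          rcases eq_or_ne k 0 with rfl | hk
          · simp [hz, ENNReal.zero_rpow_of_pos hs']
          · simp [hk, pDiam_empty, ENNReal.zero_rpow_of_pos hs']
        simp only [hterm, tsum_zero]
        exact zero_le
    · have hne : (U n).Nonempty := by
        rw [nonempty_iff_ne_empty]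
        intro h
        exact h0 (by rw [h, pDiam_empty])
      have hDle : pDiam H₁ (U n) ≤ ENNReal.ofReal ε' := hdiam n
      have hDfin : pDiam H₁ (U n) ≠ ∞ := ne_top_of_le_ne_top ENNReal.ofReal_ne_top hDle
      set d := (pDiam H₁ (U n)).toReal with hd
      have hdofReal : ENNReal.ofReal d = pDiam H₁ (U n) := ENNReal.ofReal_toReal hDfin
      have hdpos : 0 < d := ENNReal.toReal_pos h0 hDfin
      have hdε' : d ≤ ε' := ENNReal.toReal_le_of_le_ofReal hε'pos.le hDle
      have hd1 : d ≤ 1 := hdε'.trans hε'le1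
      have hpair : ∀ p ∈ U n, ∀ q ∈ U n, pDist H₁ p q ≤ d := fun p hp q hq =>
        pDist_le_of_pDiam_le hdpos.le hdofReal.ge hp hq
      have hfst : ∀ p ∈ U n, ∀ q ∈ U n, |p.1 - q.1| ≤ d ^ (1 / H₁) := by
        intro p hp q hq
        have h1 : |p.1 - q.1| ^ H₁ ≤ d := le_trans (le_max_left _ _) (hpair p hp q hq)
        calc |p.1 - q.1| = (|p.1 - q.1| ^ H₁) ^ (1 / H₁) := by
              rw [one_div, Real.rpow_rpow_inv (abs_nonneg _) h1pos.ne']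
          _ ≤ d ^ (1 / H₁) := Real.rpow_le_rpow (Real.rpow_nonneg (abs_nonneg _) _) h1
              (by positivity)
      obtain ⟨V, hVcov, hVsub, hVwidth, hVempty⟩ :=
        cut (U n) hne Prod.fst (d ^ (1 / H₁)) (d ^ (1 / H₂))
          (Real.rpow_pos_of_pos hdpos _) hfst
      have hVdiam : ∀ k, pDiam H₂ (V k) ≤ ENNReal.ofReal d := by
        intro k
        apply pDiam_le
        intro p hp q hq
        have h1 : |p.1 - q.1| ≤ d ^ (1 / H₂) := hVwidth k p hp q hq
        have h2 : |p.1 - q.1| ^ H₂ ≤ d := by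
          calc |p.1 - q.1| ^ H₂ ≤ (d ^ (1 / H₂)) ^ H₂ :=
                Real.rpow_le_rpow (abs_nonneg _) h1 h₂.le
            _ = d := by rw [one_div, Real.rpow_inv_rpow hdpos.le h₂.ne']
        have h3 : |p.2 - q.2| ≤ d :=
          le_trans (le_max_right _ _) (hpair p (hVsub k hp) q (hVsub k hq))
        exact max_le h2 h3
      refine ⟨V, hVcov, fun k => (hVdiam k).trans (ENNReal.ofReal_le_ofReal hdε'), ?_⟩
      have hMLnn : 0 ≤ d ^ (1 / H₁) / d ^ (1 / H₂) := by positivity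
      have hbound := tsum_cut_le hs' hMLnn hVempty hVdiam
      refine hbound.trans ?_
      have hMLeq : d ^ (1 / H₁) / d ^ (1 / H₂) = d ^ (-Δ) := by
        rw [← Real.rpow_sub hdpos]
        congr 1
        rw [hΔdef]; ring
      have hone : (1 : ℝ) ≤ d ^ (-Δ) :=
        Real.one_le_rpow_of_pos_of_le_one_of_nonpos hdpos hd1 (by linarith)
      calc ENNReal.ofReal (2 * (d ^ (1 / H₁) / d ^ (1 / H₂)) + 3) * ENNReal.ofReal d ^ (s + Δ)
          ≤ ENNReal.ofReal (5 * d ^ (-Δ)) * ENNReal.ofReal d ^ (s + Δ) := by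
            apply mul_le_mul_left
            apply ENNReal.ofReal_le_ofReal
            rw [hMLeq]; linarith
        _ = ENNReal.ofReal (5 * d ^ (-Δ)) * ENNReal.ofReal (d ^ (s + Δ)) := by
            rw [ENNReal.ofReal_rpow_of_pos hdpos]
        _ = ENNReal.ofReal (5 * (d ^ (-Δ) * d ^ (s + Δ))) := by
            rw [← ENNReal.ofReal_mul (by positivity)]
            congr 1
            ring
        _ = ENNReal.ofReal (5 * d ^ s) := by
            rw [← Real.rpow_add hdpos]
            norm_num
        _ = 5 * ENNReal.ofReal (d ^ s) := by
            rw [ENNReal.ofReal_mul (by norm_num)]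
            norm_num
        _ = 5 * pDiam H₁ (U n) ^ s := by
            rw [← ENNReal.ofReal_rpow_of_pos hdpos, hdofReal]
  choose V hVcov hVdiam hVsum using key
  set e : ℕ ≃ ℕ × ℤ := (Denumerable.eqv (ℕ × ℤ)).symm with he
  refine ⟨fun m => V (e m).1 (e m).2, ?_, ?_, ?_⟩
  · intro x hx
    obtain ⟨n, hn⟩ := mem_iUnion.1 (hcov hx)
    obtain ⟨k, hk⟩ := mem_iUnion.1 (hVcov n hn)
    exact mem_iUnion.2 ⟨e.symm (n, k), by simpa using hk⟩
  · intro m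
    exact (hVdiam _ _).trans (ENNReal.ofReal_le_ofReal (by linarith))
  · calc ∑' m, pDiam H₂ (V (e m).1 (e m).2) ^ (s + Δ)
        = ∑' p : ℕ × ℤ, pDiam H₂ (V p.1 p.2) ^ (s + Δ) :=
          e.tsum_eq fun p : ℕ × ℤ => pDiam H₂ (V p.1 p.2) ^ (s + Δ)
      _ = ∑' n, ∑' k, pDiam H₂ (V n k) ^ (s + Δ) :=
          ENNReal.tsum_prod (f := fun n k => pDiam H₂ (V n k) ^ (s + Δ))
      _ ≤ ∑' n, 5 * pDiam H₁ (U n) ^ s := ENNReal.tsum_le_tsum hVsum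
      _ = 5 * ∑' n, pDiam H₁ (U n) ^ s := ENNReal.tsum_mul_left
      _ < 5 * ENNReal.ofReal ε' := by
          rw [ENNReal.mul_lt_mul_iff_right (by norm_num) (by norm_num)]
          exact hsum
      _ ≤ ENNReal.ofReal ε := by
          rw [show (5 : ℝ≥0∞) = ENNReal.ofReal 5 by norm_num,
            ← ENNReal.ofReal_mul (by norm_num)]
          exact ENNReal.ofReal_le_ofReal h5ε'

lemma transferB {A : Set (ℝ × ℝ)} {H₁ H₂ s : ℝ} (h₂ : 0 < H₂) (h₂₁ : H₂ < H₁)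
    (hs : 0 ≤ s) (hN : pNull H₂ s A) : pNull H₁ (1 + H₂ / H₁ * (s - 1)) A := by
  have h1pos : 0 < H₁ := h₂.trans h₂₁
  set σ : ℝ := 1 + H₂ / H₁ * (s - 1) with hσdef
  have hr : 0 < H₂ / H₁ := div_pos h₂ h1pos
  have hrlt : H₂ / H₁ < 1 := (div_lt_one h1pos).2 h₂₁
  have hq1 : 1 < H₁ / H₂ := (one_lt_div h₂).2 h₂₁
  have hσpos : 0 < σ := by
    rw [hσdef]
    nlinarith [mul_nonneg hr.le hs]
  intro ε hε
  have hminpos : 0 < min ε 1 := lt_min hε one_pos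
  have hε'pos : 0 < min ε 1 / 6 := by linarith
  set ε' : ℝ := min ε 1 / 6 with hε'def
  have hε'le1 : ε' ≤ 1 := by
    have : min ε 1 ≤ 1 := min_le_right _ _
    rw [hε'def]; linarith
  have h5ε' : 5 * ε' ≤ ε := by
    have : min ε 1 ≤ ε := min_le_left _ _
    rw [hε'def]; linarith
  obtain ⟨U, hcov, hdiam, hsum⟩ := hN ε' hε'pos
  have key : ∀ n, ∃ V : ℤ → Set (ℝ × ℝ), (U n ⊆ ⋃ k, V k) ∧
      (∀ k, pDiam H₁ (V k) ≤ ENNReal.ofReal ε') ∧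
      (∑' k, pDiam H₁ (V k) ^ σ) ≤ 5 * pDiam H₂ (U n) ^ s := by
    intro n
    rcases eq_or_ne (pDiam H₂ (U n)) 0 with h0 | h0
    · have hz : pDiam H₁ (U n) = 0 := pDiam_zero_any h₂ h1pos h0
      refine ⟨fun k => if k = 0 then U n else ∅, ?_, ?_, ?_⟩
      · intro p hp; exact mem_iUnion.2 ⟨0, by simpa using hp⟩
      · intro k
        rcases eq_or_ne k 0 with rfl | hk
        · simp [hz]
        · simp [hk, pDiam_empty]
      · have hterm : ∀ k : ℤ,
            pDiam H₁ ((fun k => if k = 0 then U n else ∅) k) ^ σ = 0 := by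
          intro k
          rcases eq_or_ne k 0 with rfl | hk
          · simp [hz, ENNReal.zero_rpow_of_pos hσpos]
          · simp [hk, pDiam_empty, ENNReal.zero_rpow_of_pos hσpos]
        simp only [hterm, tsum_zero]
        exact zero_le
    · have hne : (U n).Nonempty := by
        rw [nonempty_iff_ne_empty]
        intro h
        exact h0 (by rw [h, pDiam_empty])
      have hDle : pDiam H₂ (U n) ≤ ENNReal.ofReal ε' := hdiam n
      have hDfin : pDiam H₂ (U n) ≠ ∞ := ne_top_of_le_ne_top ENNReal.ofReal_ne_top hDle
      set d := (pDiam H₂ (U n)).toReal with hd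
      have hdofReal : ENNReal.ofReal d = pDiam H₂ (U n) := ENNReal.ofReal_toReal hDfin
      have hdpos : 0 < d := ENNReal.toReal_pos h0 hDfin
      have hdε' : d ≤ ε' := ENNReal.toReal_le_of_le_ofReal hε'pos.le hDle
      have hd1 : d ≤ 1 := hdε'.trans hε'le1
      have hpair : ∀ p ∈ U n, ∀ q ∈ U n, pDist H₂ p q ≤ d := fun p hp q hq =>
        pDist_le_of_pDiam_le hdpos.le hdofReal.ge hp hq
      have hsnd : ∀ p ∈ U n, ∀ q ∈ U n, |p.2 - q.2| ≤ d := fun p hp q hq =>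
        le_trans (le_max_right _ _) (hpair p hp q hq)
      have hfst : ∀ p ∈ U n, ∀ q ∈ U n, |p.1 - q.1| ≤ d ^ (1 / H₂) := by
        intro p hp q hq
        have h1 : |p.1 - q.1| ^ H₂ ≤ d := le_trans (le_max_left _ _) (hpair p hp q hq)
        calc |p.1 - q.1| = (|p.1 - q.1| ^ H₂) ^ (1 / H₂) := by
              rw [one_div, Real.rpow_rpow_inv (abs_nonneg _) h₂.ne']
          _ ≤ d ^ (1 / H₂) := Real.rpow_le_rpow (Real.rpow_nonneg (abs_nonneg _) _) h1
              (by positivity)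
      obtain ⟨V, hVcov, hVsub, hVwidth, hVempty⟩ :=
        cut (U n) hne Prod.snd d (d ^ (H₁ / H₂))
          (Real.rpow_pos_of_pos hdpos _) hsnd
      have hLd : d ^ (H₁ / H₂) ≤ d := by
        calc d ^ (H₁ / H₂) ≤ d ^ (1 : ℝ) :=
              Real.rpow_le_rpow_of_exponent_ge hdpos hd1 hq1.le
          _ = d := Real.rpow_one d
      have hVdiam : ∀ k, pDiam H₁ (V k) ≤ ENNReal.ofReal (d ^ (H₁ / H₂)) := by
        intro k
        apply pDiam_le
        intro p hp q hq
        have h1 : |p.1 - q.1| ≤ d ^ (1 / H₂) := hfst p (hVsub k hp) q (hVsub k hq)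
        have h2 : |p.1 - q.1| ^ H₁ ≤ d ^ (H₁ / H₂) := by
          calc |p.1 - q.1| ^ H₁ ≤ (d ^ (1 / H₂)) ^ H₁ :=
                Real.rpow_le_rpow (abs_nonneg _) h1 h1pos.le
            _ = d ^ (H₁ / H₂) := by
                rw [← Real.rpow_mul hdpos.le]
                congr 1
                ring
        have h3 : |p.2 - q.2| ≤ d ^ (H₁ / H₂) := hVwidth k p hp q hq
        exact max_le h2 h3
      refine ⟨V, hVcov, fun k => (hVdiam k).trans
        (ENNReal.ofReal_le_ofReal (hLd.trans hdε')), ?_⟩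
      have hMLnn : 0 ≤ d / d ^ (H₁ / H₂) := by positivity
      have hbound := tsum_cut_le hσpos hMLnn hVempty hVdiam
      refine hbound.trans ?_
      have hMLeq : d / d ^ (H₁ / H₂) = d ^ (1 - H₁ / H₂) := by
        rw [Real.rpow_sub hdpos, Real.rpow_one]
      have hone : (1 : ℝ) ≤ d ^ (1 - H₁ / H₂) :=
        Real.one_le_rpow_of_pos_of_le_one_of_nonpos hdpos hd1 (by linarith)
      have hexp : (1 - H₁ / H₂) + H₁ / H₂ * σ = s := by
        rw [hσdef]
        field_simp
        ring
      calc ENNReal.ofReal (2 * (d / d ^ (H₁ / H₂)) + 3) * ENNReal.ofReal (d ^ (H₁ / H₂)) ^ σ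
          ≤ ENNReal.ofReal (5 * d ^ (1 - H₁ / H₂)) * ENNReal.ofReal (d ^ (H₁ / H₂)) ^ σ := by
            apply mul_le_mul_left
            apply ENNReal.ofReal_le_ofReal
            rw [hMLeq]; linarith
        _ = ENNReal.ofReal (5 * d ^ (1 - H₁ / H₂)) * ENNReal.ofReal ((d ^ (H₁ / H₂)) ^ σ) := by
            rw [ENNReal.ofReal_rpow_of_pos (Real.rpow_pos_of_pos hdpos _)]
        _ = ENNReal.ofReal (5 * (d ^ (1 - H₁ / H₂) * d ^ (H₁ / H₂ * σ))) := by
            rw [← ENNReal.ofReal_mul (by positivity), ← Real.rpow_mul hdpos.le]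
            congr 1
            ring
        _ = ENNReal.ofReal (5 * d ^ s) := by
            rw [← Real.rpow_add hdpos, hexp]
        _ = 5 * ENNReal.ofReal (d ^ s) := by
            rw [ENNReal.ofReal_mul (by norm_num)]
            norm_num
        _ = 5 * pDiam H₂ (U n) ^ s := by
            rw [← ENNReal.ofReal_rpow_of_pos hdpos, hdofReal]
  choose V hVcov hVdiam hVsum using key
  set e : ℕ ≃ ℕ × ℤ := (Denumerable.eqv (ℕ × ℤ)).symm with he
  refine ⟨fun m => V (e m).1 (e m).2, ?_, ?_, ?_⟩
  · intro x hx
    obtain ⟨n, hn⟩ := mem_iUnion.1 (hcov hx)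
    obtain ⟨k, hk⟩ := mem_iUnion.1 (hVcov n hn)
    exact mem_iUnion.2 ⟨e.symm (n, k), by simpa using hk⟩
  · intro m
    exact (hVdiam _ _).trans (ENNReal.ofReal_le_ofReal (by linarith))
  · calc ∑' m, pDiam H₁ (V (e m).1 (e m).2) ^ σ
        = ∑' p : ℕ × ℤ, pDiam H₁ (V p.1 p.2) ^ σ :=
          e.tsum_eq fun p : ℕ × ℤ => pDiam H₁ (V p.1 p.2) ^ σ
      _ = ∑' n, ∑' k, pDiam H₁ (V n k) ^ σ :=
          ENNReal.tsum_prod (f := fun n k => pDiam H₁ (V n k) ^ σ)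
      _ ≤ ∑' n, 5 * pDiam H₂ (U n) ^ s := ENNReal.tsum_le_tsum hVsum
      _ = 5 * ∑' n, pDiam H₂ (U n) ^ s := ENNReal.tsum_mul_left
      _ < 5 * ENNReal.ofReal ε' := by
          rw [ENNReal.mul_lt_mul_iff_right (by norm_num) (by norm_num)]
          exact hsum
      _ ≤ ENNReal.ofReal ε := by
          rw [show (5 : ℝ≥0∞) = ENNReal.ofReal 5 by norm_num,
            ← ENNReal.ofReal_mul (by norm_num)]
          exact ENNReal.ofReal_le_ofReal h5ε'

/-- For every `A ⊆ ℝ²` and `0 < H₂ < H₁ ≤ 1`: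
`dimH(A;ϱ_{H₂}) − (1/H₂ − 1/H₁) ≤ dimH(A;ϱ_{H₁}) ≤ 1 + (H₂/H₁)(dimH(A;ϱ_{H₂}) − 1)`. -/
theorem stmt_3 (A : Set (ℝ × ℝ)) (H₁ H₂ : ℝ) (h₂ : 0 < H₂) (h₂₁ : H₂ < H₁) (h₁ : H₁ ≤ 1) :
    pDimH H₂ A - (1 / H₂ - 1 / H₁) ≤ pDimH H₁ A ∧
    pDimH H₁ A ≤ 1 + (H₂ / H₁) * (pDimH H₂ A - 1) := by
  have h1pos : 0 < H₁ := h₂.trans h₂₁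
  have hr : 0 < H₂ / H₁ := div_pos h₂ h1pos
  have hrlt : H₂ / H₁ < 1 := (div_lt_one h1pos).2 h₂₁
  have hΔpos : 0 < 1 / H₂ - 1 / H₁ := by
    have := one_div_lt_one_div_of_lt h₂ h₂₁
    linarith
  set S₁ := {s : ℝ | 0 ≤ s ∧ pNull H₁ s A} with hS₁
  set S₂ := {s : ℝ | 0 ≤ s ∧ pNull H₂ s A} with hS₂
  have e₁ : pDimH H₁ A = sInf S₁ := rfl
  have e₂ : pDimH H₂ A = sInf S₂ := rfl
  have hbd₁ : BddBelow S₁ := ⟨0, fun s hs => hs.1⟩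
  have hbd₂ : BddBelow S₂ := ⟨0, fun s hs => hs.1⟩
  have map12 : ∀ s ∈ S₁, s + (1 / H₂ - 1 / H₁) ∈ S₂ := fun s hs =>
    ⟨by linarith [hs.1], transferA h₂ h₂₁ hs.1 hs.2⟩
  have map21 : ∀ s ∈ S₂, 1 + H₂ / H₁ * (s - 1) ∈ S₁ := fun s hs =>
    ⟨by nlinarith [mul_nonneg hr.le hs.1], transferB h₂ h₂₁ hs.1 hs.2⟩
  rcases S₂.eq_empty_or_nonempty with h2e | h2ne
  · have h1e : S₁ = ∅ := by
      rw [eq_empty_iff_forall_notMem]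
      intro s hs
      exact absurd (map12 s hs) (by rw [h2e]; exact notMem_empty _)
    rw [e₁, e₂, h1e, h2e, Real.sInf_empty]
    constructor <;> nlinarith
  · have h1ne : S₁.Nonempty := ⟨_, map21 _ h2ne.some_mem⟩
    constructor
    · rw [e₁, e₂]
      have hlb : ∀ s ∈ S₁, sInf S₂ - (1 / H₂ - 1 / H₁) ≤ s := fun s hs => by
        have := csInf_le hbd₂ (map12 s hs)
        linarith
      linarith [le_csInf h1ne hlb]
    · rw [e₁, e₂]
      have hq : 0 < H₁ / H₂ := div_pos h1pos h₂
      have key : ∀ s ∈ S₂, (sInf S₁ - 1) * (H₁ / H₂) + 1 ≤ s := by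
        intro s hs
        have h := csInf_le hbd₁ (map21 s hs)
        have h2 : sInf S₁ - 1 ≤ H₂ / H₁ * (s - 1) := by linarith
        have h3 := mul_le_mul_of_nonneg_right h2 hq.le
        have h4 : H₂ / H₁ * (s - 1) * (H₁ / H₂) = s - 1 := by
          field_simp
        linarith
      have h5 := le_csInf h2ne key
      have h6 : (sInf S₁ - 1) * (H₁ / H₂) ≤ sInf S₂ - 1 := by linarith
      have h7 := mul_le_mul_of_nonneg_right h6 hr.le
      have h8 : (sInf S₁ - 1) * (H₁ / H₂) * (H₂ / H₁) = sInf S₁ - 1 := by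
        field_simp
      linarith
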